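/- Let R be the C[ℏ]-algebra generated by a commutative polynomial part Sym(V) (V a finite-dimensional vector space with a linear functional assignment x ↦ x̄ ∈ t) and group-like elements q^λ for λ in a commutative monoid Λ ⊆ t*, with relations x q^λ = q^λ (x + ℏ⟨λ, x̄⟩). Then the multiplicative set 𝔖 generated by the elements (1 − q^λ), λ ∈ Σ₊ (a finite subset of Λ), satisfies the left Ore condition in R: for any s ∈ 𝔖 and r ∈ R there exist s' ∈ 𝔖 and r' ∈ R with s' r = r' s. -/

import Mathlib

/-- The multiplicative set generated by the elements `1 − q^λ`, `λ ∈ Σ₊`, satisfies the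
left Ore condition in the ring `R = S ⊗ Sym V` with relations
`x q^λ = q^λ (x + ℏ⟨λ, x̄⟩)`.  Here `R` is presented abstractly: a `ℂ`-algebra
generated by a commuting family `σ(V)` (containing the central element `ℏ = σ h0`) and
monoid-like elements `q λ` for `λ` in a commutative monoid `Λ`, subject to the stated
commutation relation, where `⟨λ, x̄⟩` is the pairing `B λ x` (with `B λ h0 = 0`,
i.e. `ℏ̄ = 0`). -/
theorem stmt5 (R : Type) [Ring R] [Algebra ℂ R]
    (Λ : Type) [AddCommMonoid Λ]
    (V : Type) [AddCommGroup V] [Module ℂ V]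
    (q : Λ → R) (hq0 : q 0 = 1) (hqadd : ∀ l m : Λ, q (l + m) = q l * q m)
    (σ : V →ₗ[ℂ] R) (h0 : V) (B : Λ → V → ℂ)
    (hB0 : ∀ l, B l h0 = 0)
    (hcentral : ∀ r : R, σ h0 * r = r * σ h0)
    (hVcomm : ∀ x y : V, σ x * σ y = σ y * σ x)
    (hrel : ∀ (x : V) (l : Λ), σ x * q l = q l * (σ x + B l x • σ h0))
    (hgen : Algebra.adjoin ℂ (Set.range (⇑σ) ∪ Set.range q) = ⊤)
    (Sp : Finset Λ)
    (S : Submonoid R) (hS : S = Submonoid.closure {s | ∃ l ∈ Sp, s = 1 - q l}) :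
    ∀ s ∈ S, ∀ r : R, ∃ s' ∈ S, ∃ r' : R, s' * r = r' * s := by
  -- commutation of q's
  have hqcomm : ∀ l m : Λ, q m * q l = q l * q m := by
    intro l m
    rw [← hqadd, ← hqadd, add_comm]
  -- key lemma: for s = 1 - q l, ∀ r N, ∃ M r', s^M * r = r' * s^N
  have key : ∀ (l : Λ) (r : R) (N : ℕ), ∃ (M : ℕ) (r' : R),
      (1 - q l) ^ M * r = r' * (1 - q l) ^ N := by
    intro l r
    set s : R := 1 - q l with hs
    have hqs : ∀ m : Λ, q m * s = s * q m := by
      intro m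
      simp only [hs, mul_sub, sub_mul, mul_one, one_mul, hqcomm l m]
    have hhs : σ h0 * s = s * σ h0 := (hcentral s).symm ▸ rfl
    -- base commutator for σ x
    have hbase : ∀ x : V, s * σ x = σ x * s + B l x • (σ h0 * q l) := by
      intro x
      have h1 : σ x * q l = q l * σ x + B l x • (σ h0 * q l) := by
        rw [hrel x l, mul_add, mul_smul_comm, ← hcentral (q l)]
      have h2 : q l * σ x = σ x * q l - B l x • (σ h0 * q l) := by
        rw [h1]; abel
      rw [hs, sub_mul, one_mul, mul_sub, mul_one, h2]
      abel
    -- power lemma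
    have hpow : ∀ (x : V) (N : ℕ),
        s ^ (N + 1) * σ x = (σ x * s + (N + 1) • (B l x • (σ h0 * q l))) * s ^ N := by
      intro x N
      set a : R := B l x • (σ h0 * q l) with ha
      have has : s * a = a * s := by
        rw [ha, mul_smul_comm, smul_mul_assoc]
        congr 1
        rw [← mul_assoc, ← hhs, mul_assoc, ← hqs l, ← mul_assoc]
      induction N with
      | zero => simp [hbase x, ha]
      | succ n ih =>
        have : s ^ (n + 1 + 1) * σ x = s * (s ^ (n + 1) * σ x) := by
          rw [← mul_assoc, ← pow_succ']
        rw [this, ih]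
        have hsa : s * (n + 1) • a = (n + 1) • a * s := by
          rw [mul_smul_comm, smul_mul_assoc, has]
        have hstep : s * ((σ x * s + (n + 1) • a) * s ^ n)
            = ((σ x * s + (n + 1 + 1) • a) * s) * s ^ n := by
          rw [← mul_assoc]
          congr 1
          have hnn : (n + 1 + 1) • a = (n + 1) • a + a := succ_nsmul a (n + 1)
          rw [mul_add, ← mul_assoc, hbase x, ← ha, hsa, hnn, add_mul, add_mul, add_mul]
          abel
        rw [hstep, mul_assoc, ← pow_succ']
    -- now induct over the algebra generated
    have hr : r ∈ Algebra.adjoin ℂ (Set.range (⇑σ) ∪ Set.range q) := by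
      rw [hgen]; trivial
    induction hr using Algebra.adjoin_induction with
    | mem y hy =>
      rcases hy with ⟨x, rfl⟩ | ⟨m, rfl⟩
      · intro N
        exact ⟨N + 1, σ x * s + (N + 1) • (B l x • (σ h0 * q l)), hpow x N⟩
      · intro N
        refine ⟨N, q m, ?_⟩
        have : Commute (q m) s := hqs m
        exact ((this.pow_right N).symm)
    | algebraMap c =>
      intro N
      exact ⟨N, algebraMap ℂ R c, (Algebra.commutes c (s ^ N)).symm⟩
    | add r1 r2 h1 h2 ih1 ih2 =>
      intro N
      obtain ⟨M1, r1', e1⟩ := ih1 N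
      obtain ⟨M2, r2', e2⟩ := ih2 N
      refine ⟨max M1 M2, s ^ (max M1 M2 - M1) * r1' + s ^ (max M1 M2 - M2) * r2', ?_⟩
      have hm1 : s ^ max M1 M2 = s ^ (max M1 M2 - M1) * s ^ M1 := by
        rw [← pow_add, Nat.sub_add_cancel (le_max_left M1 M2)]
      have hm2 : s ^ max M1 M2 = s ^ (max M1 M2 - M2) * s ^ M2 := by
        rw [← pow_add, Nat.sub_add_cancel (le_max_right M1 M2)]
      have e1' : s ^ max M1 M2 * r1 = (s ^ (max M1 M2 - M1) * r1') * s ^ N := by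
        rw [hm1, mul_assoc, e1, ← mul_assoc]
      have e2' : s ^ max M1 M2 * r2 = (s ^ (max M1 M2 - M2) * r2') * s ^ N := by
        rw [hm2, mul_assoc, e2, ← mul_assoc]
      rw [mul_add, e1', e2', add_mul]
    | mul r1 r2 h1 h2 ih1 ih2 =>
      intro N
      obtain ⟨M2, r2', e2⟩ := ih2 N
      obtain ⟨M1, r1', e1⟩ := ih1 M2
      refine ⟨M1, r1' * r2', ?_⟩
      rw [← mul_assoc, e1, mul_assoc, e2, ← mul_assoc]
  -- main Ore argument
  intro s hsS r
  subst hS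
  induction hsS using Submonoid.closure_induction generalizing r with
  | mem y hy =>
    obtain ⟨l, hl, rfl⟩ := hy
    obtain ⟨M, r', e⟩ := key l r 1
    have hmem : (1 - q l) ∈ {s : R | ∃ l ∈ Sp, s = 1 - q l} := ⟨l, hl, rfl⟩
    refine ⟨(1 - q l) ^ M, pow_mem (Submonoid.subset_closure hmem) M, r', ?_⟩
    rw [e, pow_one]
  | one =>
    exact ⟨1, one_mem _, r, by rw [one_mul, mul_one]⟩
  | mul s1 s2 hs1 hs2 ih1 ih2 =>
    obtain ⟨t2, ht2, r2, e2⟩ := ih2 r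
    obtain ⟨t1, ht1, r1, e1⟩ := ih1 r2
    refine ⟨t1 * t2, mul_mem ht1 ht2, r1, ?_⟩
    rw [mul_assoc, e2, ← mul_assoc, e1, mul_assoc]
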